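/- Let $f(z) = \int \varphi(z - u)\, dG(u)$ be a mixture of standard normal densities (where $\varphi$ is the $\mathcal{N}(0,1)$ density and $G$ is any probability measure on $\mathbb{R}$). Then for all $z \in \mathbb{R}$ with $f(z) > 0$: $|f'(z)/f(z)| \leq \sqrt{-\log(2\pi f(z)^2)}$. -/

import Mathlib

open MeasureTheory

/-! Auxiliary lemmas for the Gaussian-mixture score bound. -/

lemma aux_abs_le_exp (t : ℝ) : |t| ≤ Real.exp (t ^ 2 / 2) := by
  nlinarith [Real.add_one_le_exp (t ^ 2 / 2), sq_abs t, sq_nonneg (|t| - 1),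
    Real.exp_pos (t ^ 2 / 2)]

lemma aux_mul_exp_le_one (t : ℝ) : |t| * Real.exp (-(t ^ 2) / 2) ≤ 1 := by
  have he : 0 < Real.exp (t ^ 2 / 2) := Real.exp_pos _
  have h1 : |t| ≤ Real.exp (t ^ 2 / 2) := aux_abs_le_exp t
  have : Real.exp (-(t ^ 2) / 2) = (Real.exp (t ^ 2 / 2))⁻¹ := by
    rw [← Real.exp_neg]; ring_nf
  rw [this, mul_inv_le_iff₀ he, one_mul]
  exact h1

lemma aux_sq_mul_exp_le_two (t : ℝ) : t ^ 2 * Real.exp (-(t ^ 2) / 2) ≤ 2 := by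
  have he : 0 < Real.exp (t ^ 2 / 2) := Real.exp_pos _
  have h1 : t ^ 2 / 2 ≤ Real.exp (t ^ 2 / 2) := by
    nlinarith [Real.add_one_le_exp (t ^ 2 / 2)]
  have h2 : Real.exp (-(t ^ 2) / 2) = (Real.exp (t ^ 2 / 2))⁻¹ := by
    rw [← Real.exp_neg]; ring_nf
  rw [h2, mul_inv_le_iff₀ he]
  nlinarith

/-- Gaussian-mixture score bound (Jiang–Zhang Lemma A.1): for a mixture of
standard normal densities `f(z) = ∫ φ(z - u) dG(u)`, one has
`|f'(z)/f(z)| ≤ √(-log(2π f(z)²))` wherever `f(z) > 0`. -/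
theorem stmt7
    (G : Measure ℝ) [IsProbabilityMeasure G]
    (φ f : ℝ → ℝ)
    (hφ : ∀ x, φ x = (Real.sqrt (2 * Real.pi))⁻¹ * Real.exp (-(x ^ 2) / 2))
    (hf : ∀ z, f z = ∫ u, φ (z - u) ∂G) :
    ∀ z, 0 < f z →
      |deriv f z / f z| ≤ Real.sqrt (-Real.log (2 * Real.pi * (f z) ^ 2)) := by
  have h2pi : (0:ℝ) < 2 * Real.pi := by positivity
  set s : ℝ := Real.sqrt (2 * Real.pi) with hs_def
  have hs : 0 < s := Real.sqrt_pos.2 h2pi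
  have hs1 : (1:ℝ) ≤ s := by
    rw [hs_def, show (1:ℝ) = Real.sqrt 1 by simp]
    exact Real.sqrt_le_sqrt (by nlinarith [Real.pi_gt_three])
  have hc1 : s⁻¹ ≤ 1 := by
    rw [inv_le_one_iff₀]; right; exact hs1
  -- basic facts about φ
  have hφpos : ∀ x, 0 < φ x := by
    intro x; rw [hφ]
    exact mul_pos (inv_pos.2 hs) (Real.exp_pos _)
  have hφle : ∀ x, φ x ≤ 1 := by
    intro x; rw [hφ]
    have : Real.exp (-(x ^ 2) / 2) ≤ 1 := Real.exp_le_one_iff.2 (by nlinarith [sq_nonneg x])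
    calc s⁻¹ * Real.exp (-(x ^ 2) / 2) ≤ s⁻¹ * 1 := by
            exact mul_le_mul_of_nonneg_left this (inv_pos.2 hs).le
      _ ≤ 1 := by rw [mul_one]; exact hc1
  have hφb1 : ∀ x, |x * φ x| ≤ 1 := by
    intro x
    rw [abs_mul, abs_of_pos (hφpos x), hφ]
    calc |x| * (s⁻¹ * Real.exp (-(x ^ 2) / 2))
        = s⁻¹ * (|x| * Real.exp (-(x ^ 2) / 2)) := by ring
      _ ≤ 1 * 1 := by
          apply mul_le_mul hc1 (aux_mul_exp_le_one x) (by positivity) zero_le_one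
      _ = 1 := by ring
  have hφb2 : ∀ x, x ^ 2 * φ x ≤ 2 := by
    intro x
    rw [hφ]
    calc x ^ 2 * (s⁻¹ * Real.exp (-(x ^ 2) / 2))
        = s⁻¹ * (x ^ 2 * Real.exp (-(x ^ 2) / 2)) := by ring
      _ ≤ 1 * 2 := by
          apply mul_le_mul hc1 (aux_sq_mul_exp_le_two x) (by positivity) zero_le_one
      _ = 2 := by ring
  have hφcont : Continuous φ := by
    rw [funext hφ]
    exact continuous_const.mul (Real.continuous_exp.comp ((continuous_pow 2).neg.div_const 2))
  -- integrability helper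
  have hint : ∀ (g : ℝ → ℝ) (C : ℝ), Continuous g → (∀ u, |g u| ≤ C) → Integrable g G := by
    intro g C hg hC
    exact ⟨hg.aestronglyMeasurable,
      HasFiniteIntegral.of_bounded (C := C) (Filter.Eventually.of_forall hC)⟩
  intro z hz
  have hsub : Continuous fun u : ℝ => z - u := continuous_const.sub continuous_id
  have I0 : Integrable (fun u => φ (z - u)) G := by
    refine hint _ 1 (hφcont.comp hsub) fun u => ?_
    rw [abs_of_pos (hφpos _)]; exact hφle _
  have I1 : Integrable (fun u => (z - u) * φ (z - u)) G := by
    refine hint _ 1 (hsub.mul (hφcont.comp hsub)) fun u => hφb1 _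
  have I2 : Integrable (fun u => (z - u) ^ 2 * φ (z - u)) G := by
    refine hint _ 2 ((hsub.pow 2).mul (hφcont.comp hsub)) fun u => ?_
    rw [abs_of_nonneg (mul_nonneg (sq_nonneg _) (hφpos _).le)]
    exact hφb2 _
  set F : ℝ := f z with hF_def
  set A : ℝ := ∫ u, (z - u) * φ (z - u) ∂G with hA_def
  set B : ℝ := ∫ u, (z - u) ^ 2 * φ (z - u) ∂G with hB_def
  have hFint : F = ∫ u, φ (z - u) ∂G := hf z
  -- Step 1: derivative of f
  have hd : ∀ (x u : ℝ), HasDerivAt (fun y => φ (y - u)) (-((x - u) * φ (x - u))) x := by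
    intro x u
    have h0 : HasDerivAt (fun y : ℝ => y - u) 1 x := (hasDerivAt_id x).sub_const u
    have h1 : HasDerivAt (fun y : ℝ => -((y - u) ^ 2) / 2) (-(x - u)) x := by
      have h2 := (h0.pow 2).neg.div_const 2
      refine h2.congr_deriv ?_
      simp; ring
    have h3 := h1.exp
    have h4 := h3.const_mul (s⁻¹)
    have heq : (fun y => φ (y - u)) = fun y => s⁻¹ * Real.exp (-((y - u) ^ 2) / 2) := by
      funext y; rw [hφ]
    rw [heq]
    refine h4.congr_deriv ?_
    rw [hφ]; ring
  have hkey := hasDerivAt_integral_of_dominated_loc_of_deriv_le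
    (F := fun x u => φ (x - u)) (F' := fun x u => -((x - u) * φ (x - u)))
    (x₀ := z) (bound := fun _ => (1:ℝ)) (μ := G) (Metric.ball_mem_nhds z one_pos)
    (Filter.Eventually.of_forall fun x =>
      ((hφcont.comp (continuous_const.sub continuous_id)).aestronglyMeasurable))
    (by simpa using I0)
    I1.neg.1
    (Filter.Eventually.of_forall fun u => fun x _ => by
      rw [norm_neg, Real.norm_eq_abs]; exact hφb1 _)
    (integrable_const 1)
    (Filter.Eventually.of_forall fun u => fun x _ => hd x u)
  have hfderiv : HasDerivAt f (∫ u, -((z - u) * φ (z - u)) ∂G) z := by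
    rw [funext hf]
    exact hkey.2
  have hderiv : deriv f z = -A := by
    rw [hfderiv.deriv, hA_def, integral_neg]
  -- Step 2: Cauchy–Schwarz via the discriminant
  have hq : ∀ t : ℝ, 0 ≤ B * (t * t) + (2 * A) * t + F := by
    intro t
    have hI : ∫ u, ((z - u) * t + 1) ^ 2 * φ (z - u) ∂G
        = t ^ 2 * B + 2 * t * A + F := by
      have hexp : ∀ u, ((z - u) * t + 1) ^ 2 * φ (z - u)
          = t ^ 2 * ((z - u) ^ 2 * φ (z - u)) + 2 * t * ((z - u) * φ (z - u)) + φ (z - u) := by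
        intro u; ring
      rw [integral_congr_ae (Filter.Eventually.of_forall hexp)]
      have e1 : Integrable (fun u => t ^ 2 * ((z - u) ^ 2 * φ (z - u))) G := I2.const_mul _
      have e2 : Integrable (fun u => 2 * t * ((z - u) * φ (z - u))) G := I1.const_mul _
      have e12 : Integrable (fun u => t ^ 2 * ((z - u) ^ 2 * φ (z - u))
          + 2 * t * ((z - u) * φ (z - u))) G := e1.add e2
      rw [integral_add e12 I0, integral_add e1 e2,
        integral_const_mul, integral_const_mul, hA_def, hB_def, hFint]
    have hnn : 0 ≤ ∫ u, ((z - u) * t + 1) ^ 2 * φ (z - u) ∂G :=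
      integral_nonneg fun u => mul_nonneg (sq_nonneg _) (hφpos _).le
    rw [hI] at hnn
    nlinarith [hnn]
  have hdisc := discrim_le_zero hq
  rw [discrim] at hdisc
  have hCS : A ^ 2 ≤ B * F := by nlinarith [hdisc]
  -- Step 3: Jensen's inequality for t ↦ t log t
  have hψ : ∀ u, s * φ (z - u) = Real.exp (-((z - u) ^ 2) / 2) := by
    intro u
    rw [hφ, ← mul_assoc, mul_inv_cancel₀ hs.ne', one_mul]
  have hglog : ∀ u, (s * φ (z - u)) * Real.log (s * φ (z - u))
      = (-(1/2) * s) * ((z - u) ^ 2 * φ (z - u)) := by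
    intro u
    rw [hψ u, Real.log_exp, ← hψ u]
    ring
  have hgi : Integrable ((fun t => t * Real.log t) ∘ (fun u => s * φ (z - u))) G := by
    refine (I2.const_mul (-(1/2) * s)).congr
      (Filter.Eventually.of_forall fun u => ?_)
    simp only [Function.comp]
    exact (hglog u).symm
  have hJen := Real.convexOn_mul_log.map_integral_le (μ := G)
    Real.continuous_mul_log.continuousOn isClosed_Ici
    (Filter.Eventually.of_forall fun u =>
      Set.mem_Ici.2 (mul_nonneg hs.le (hφpos _).le))
    (I0.const_mul s) hgi
  have hIψ : ∫ u, s * φ (z - u) ∂G = s * F := by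
    rw [integral_const_mul, hFint]
  have hIg : ∫ u, (s * φ (z - u)) * Real.log (s * φ (z - u)) ∂G = (-(1/2) * s) * B := by
    rw [integral_congr_ae (Filter.Eventually.of_forall hglog), integral_const_mul, hB_def]
  rw [hIψ] at hJen
  have hJen' : (s * F) * Real.log (s * F) ≤ (-(1/2) * s) * B := by
    calc (s * F) * Real.log (s * F) ≤ ∫ u, (fun t => t * Real.log t) (s * φ (z - u)) ∂G := hJen
      _ = (-(1/2) * s) * B := hIg
  have hsF : 0 < s * F := mul_pos hs hz
  have hlog2 : Real.log (2 * Real.pi * F ^ 2) = 2 * Real.log (s * F) := by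
    have h1 : 2 * Real.pi * F ^ 2 = (s * F) ^ 2 := by
      rw [mul_pow, hs_def, Real.sq_sqrt h2pi.le]
    rw [h1, Real.log_pow]
    norm_num
  have hJ : B ≤ -(F * Real.log (2 * Real.pi * F ^ 2)) := by
    rw [hlog2]
    nlinarith [hJen', hs, mul_pos hs hz]
  -- Step 4: assemble
  have hF2 : 0 < F ^ 2 := by positivity
  have hsq : (deriv f z / F) ^ 2 ≤ -Real.log (2 * Real.pi * F ^ 2) := by
    rw [div_pow, div_le_iff₀ hF2, hderiv]
    have : (-A) ^ 2 = A ^ 2 := by ring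
    rw [this]
    nlinarith [hCS, hJ, hz]
  exact Real.abs_le_sqrt hsq
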